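/- Let A be an n×n complex matrix with rows R_1,…,R_n. Then for every 0 < r ≤ 2, ∑_{k=1}^n s_k(A)^r ≤ ∑_{k=1}^n ‖R_k‖₂^r, where s_1(A),…,s_n(A) are the singular values of A. -/

import Mathlib

/-- The singular values of a square complex matrix (unordered enumeration):
`s_i(A) = sqrt(λ_i(A Aᴴ))`. -/
noncomputable def svals {n : ℕ} (A : Matrix (Fin n) (Fin n) ℂ) : Fin n → ℝ :=
  fun i => Real.sqrt ((Matrix.isHermitian_mul_conjTranspose_self A).eigenvalues i)

/-- The `i`-th row of `A` as a vector of the Euclidean space `ℂⁿ`. -/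
noncomputable def rowE {n : ℕ} (A : Matrix (Fin n) (Fin n) ℂ) (i : Fin n) :
    EuclideanSpace ℂ (Fin n) := (WithLp.equiv 2 (Fin n → ℂ)).symm (A i)

/-- Schatten bound: for an `n × n` complex matrix `A` with rows `R_1, …, R_n` and every
`0 < r ≤ 2`, one has `∑_k s_k(A)^r ≤ ∑_k ‖R_k‖₂^r`. -/
theorem schatten_bound {n : ℕ} (A : Matrix (Fin n) (Fin n) ℂ)
    (r : ℝ) (hr0 : 0 < r) (hr2 : r ≤ 2) :
    ∑ k : Fin n, svals A k ^ r ≤ ∑ k : Fin n, ‖rowE A k‖ ^ r := by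
  set hB := Matrix.isHermitian_mul_conjTranspose_self A with hBdef
  set lam : Fin n → ℝ := hB.eigenvalues with hlam
  set U : Matrix (Fin n) (Fin n) ℂ := (hB.eigenvectorUnitary : Matrix (Fin n) (Fin n) ℂ)
    with hU
  set p : ℝ := r / 2 with hp
  have hp0 : 0 < p := by positivity
  have hp1 : p ≤ 1 := by rw [hp]; linarith
  have hlam0 : ∀ i, 0 ≤ lam i :=
    fun i => Matrix.eigenvalues_self_mul_conjTranspose_nonneg A i
  set w : Fin n → Fin n → ℝ := fun k i => ‖U k i‖ ^ 2 with hw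
  have hw0 : ∀ k i, 0 ≤ w k i := fun k i => by positivity
  have hzc : ∀ z : ℂ, z * star z = ((‖z‖ ^ 2 : ℝ) : ℂ) := fun z => by
    rw [RCLike.star_def, RCLike.mul_conj]; norm_cast
  have hent : ∀ k i, U k i * (star U) i k = ((w k i : ℝ) : ℂ) := fun k i => by
    rw [Matrix.star_apply]; exact hzc _
  have hent' : ∀ k i, (star U) i k * U k i = ((w k i : ℝ) : ℂ) := fun k i => by
    rw [mul_comm]; exact hent k i
  have hUU : U * star U = 1 := Unitary.coe_mul_star_self hB.eigenvectorUnitary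
  have hUU' : star U * U = 1 := Unitary.coe_star_mul_self hB.eigenvectorUnitary
  have hrow : ∀ k, ∑ i, w k i = 1 := by
    intro k
    have h1 : (U * star U) k k = 1 := by rw [hUU]; simp
    rw [Matrix.mul_apply] at h1
    simp only [hent] at h1
    exact_mod_cast h1
  have hcol : ∀ i, ∑ k, w k i = 1 := by
    intro i
    have h1 : (star U * U) i i = 1 := by rw [hUU']; simp
    rw [Matrix.mul_apply] at h1
    simp only [hent'] at h1
    exact_mod_cast h1
  set d : Fin n → ℝ := fun k => ∑ j, ‖A k j‖ ^ 2 with hd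
  have hd0 : ∀ k, 0 ≤ d k := fun k => Finset.sum_nonneg fun j _ => by positivity
  have hBkk : ∀ k, (A * A.conjTranspose) k k = ((d k : ℝ) : ℂ) := by
    intro k
    rw [Matrix.mul_apply]
    have h2 : ∀ j, A k j * A.conjTranspose j k = ((‖A k j‖ ^ 2 : ℝ) : ℂ) := fun j => by
      rw [Matrix.conjTranspose_apply]; exact hzc _
    simp only [h2]
    rw [hd]
    push_cast
    rfl
  have hBkk' : ∀ k, (A * A.conjTranspose) k k = ((∑ i, w k i * lam i : ℝ) : ℂ) := by
    intro k
    rw [hB.spectral_theorem, Unitary.conjStarAlgAut_apply, ← hU, ← hlam, Matrix.mul_apply]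
    push_cast
    refine Finset.sum_congr rfl fun i _ => ?_
    rw [Matrix.mul_diagonal, Function.comp_apply, mul_right_comm, hent]
    rfl
  have hdw : ∀ k, d k = ∑ i, w k i * lam i := by
    intro k
    have := (hBkk k).symm.trans (hBkk' k)
    exact_mod_cast this
  have key : ∀ k, ∑ i, w k i * lam i ^ p ≤ d k ^ p := by
    intro k
    have := (Real.concaveOn_rpow hp0.le hp1).le_map_sum (t := Finset.univ)
      (w := w k) (p := lam) (fun i _ => hw0 k i) (hrow k)
      (fun i _ => Set.mem_Ici.2 (hlam0 i))
    simpa only [smul_eq_mul, ← hdw k] using this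
  have hsv : ∀ k, svals A k ^ r = lam k ^ p := by
    intro k
    have h0 : svals A k = Real.sqrt (lam k) := rfl
    rw [h0, Real.sqrt_eq_rpow, ← Real.rpow_mul (hlam0 k)]
    congr 1
    rw [hp]; ring
  have hrw : ∀ k, ‖rowE A k‖ ^ r = d k ^ p := by
    intro k
    have hnorm : ‖rowE A k‖ = Real.sqrt (d k) := by
      rw [rowE, EuclideanSpace.norm_eq]
      congr 1
    rw [hnorm, Real.sqrt_eq_rpow, ← Real.rpow_mul (hd0 k)]
    congr 1
    rw [hp]; ring
  calc ∑ k, svals A k ^ r = ∑ k, lam k ^ p := by simp only [hsv]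
    _ = ∑ i, (∑ k, w k i) * lam i ^ p := by
        refine Finset.sum_congr rfl fun i _ => ?_
        rw [hcol i, one_mul]
    _ = ∑ k, ∑ i, w k i * lam i ^ p := by
        rw [Finset.sum_comm]
        exact Finset.sum_congr rfl fun i _ => by rw [Finset.sum_mul]
    _ ≤ ∑ k, d k ^ p := Finset.sum_le_sum fun k _ => key k
    _ = ∑ k, ‖rowE A k‖ ^ r := by simp only [hrw]
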